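/- Let n ≥ 1, let U ⊆ ℝⁿ be open and convex, let f : ℝⁿ → ℝⁿ be continuously differentiable on U with Jacobian J_f, let xₙ ∈ U, and let A : ℝⁿ → ℝⁿ be an invertible linear map. Assume: (A★1) there is ω★ > 0 such that for all x, v ∈ U and every t ∈ [0,1], writing z = t·x + (1−t)·v, one has ‖A⁻¹ (J_f(x) − J_f(z)) (x − v)‖ ≤ ω★ (1−t) ‖x − v‖²; (A★2) there is κ★ ∈ [0,1) such that ‖Id − A⁻¹ J_f(x)‖ ≤ κ★ for all x ∈ U; (A★3) αₙ = ‖A⁻¹ f(xₙ)‖ > 0 and ω★ αₙ ≤ (1−κ★)²/2; (A★4) the closed ball of radius R★ = (1−κ★)/ω★ + √((1−κ★)²/(ω★)² − 2αₙ/ω★) centered at xₙ is contained in U. Define the simplified Newton iterates by u₀ = xₙ and u_{j+1} = u_j − A⁻¹ f(u_j). Then all iterates u_j lie in the closed ball B_{R★}(xₙ), the sequence (u_j) converges to a limit u_∞ ∈ B_{R★}(xₙ), and u_∞ is the unique zero of f in B_{R★}(xₙ). -/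

import Mathlib

/-- **Corollary** (convergence of the simplified Newton iteration).
Under the strengthened assumptions (A★1)--(A★4), the simplified Newton iterates
`u₀ = xn`, `u_{j+1} = u_j - A⁻¹ f(u_j)` all remain in the closed ball `B_{R★}(xn)`
and converge to the unique zero of `f` in `B_{R★}(xn)`. -/
theorem simplified_newton_iterates_converge_to_unique_zero
    {n : ℕ} (hn : 1 ≤ n)
    (U : Set (EuclideanSpace ℝ (Fin n))) (hUopen : IsOpen U) (hUconv : Convex ℝ U)
    (f : EuclideanSpace ℝ (Fin n) → EuclideanSpace ℝ (Fin n))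
    (J : EuclideanSpace ℝ (Fin n) →
      (EuclideanSpace ℝ (Fin n) →L[ℝ] EuclideanSpace ℝ (Fin n)))
    (hf : ∀ x ∈ U, HasFDerivAt f (J x) x)
    (hJcont : ContinuousOn J U)
    (xn : EuclideanSpace ℝ (Fin n)) (hxn : xn ∈ U)
    (A : EuclideanSpace ℝ (Fin n) ≃L[ℝ] EuclideanSpace ℝ (Fin n))
    (ω κ : ℝ) (hω : 0 < ω) (hκ0 : 0 ≤ κ) (hκ1 : κ < 1)
    (hA1 : ∀ x ∈ U, ∀ v ∈ U, ∀ t ∈ Set.Icc (0:ℝ) 1,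
      ‖A.symm ((J x - J (t • x + (1 - t) • v)) (x - v))‖
        ≤ ω * (1 - t) * ‖x - v‖ ^ 2)
    (hA2 : ∀ x ∈ U,
      ‖ContinuousLinearMap.id ℝ (EuclideanSpace ℝ (Fin n))
        - (A.symm : EuclideanSpace ℝ (Fin n) →L[ℝ] EuclideanSpace ℝ (Fin n)).comp (J x)‖
        ≤ κ)
    (α : ℝ) (hα : α = ‖A.symm (f xn)‖) (hαpos : 0 < α)
    (hA3 : ω * α ≤ (1 - κ) ^ 2 / 2)
    (R : ℝ) (hR : R = (1 - κ) / ω + Real.sqrt ((1 - κ) ^ 2 / ω ^ 2 - 2 * α / ω))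
    (hA4 : Metric.closedBall xn R ⊆ U)
    (u : ℕ → EuclideanSpace ℝ (Fin n))
    (hu0 : u 0 = xn)
    (hu : ∀ j : ℕ, u (j + 1) = u j - A.symm (f (u j))) :
    (∀ j : ℕ, u j ∈ Metric.closedBall xn R) ∧
    ∃ uinf ∈ Metric.closedBall xn R,
      Filter.Tendsto u Filter.atTop (nhds uinf) ∧ f uinf = 0 ∧
      ∀ w ∈ Metric.closedBall xn R, f w = 0 → w = uinf := by
  set g : EuclideanSpace ℝ (Fin n) → EuclideanSpace ℝ (Fin n) :=
    fun v => v - A.symm (f v) with hg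
  set s : Set (EuclideanSpace ℝ (Fin n)) := Metric.closedBall xn R with hs
  have h1κ : 0 < 1 - κ := by linarith
  have hRpos : 0 < R := by
    rw [hR]
    have := Real.sqrt_nonneg ((1 - κ) ^ 2 / ω ^ 2 - 2 * α / ω)
    positivity
  have hxns : xn ∈ s := Metric.mem_closedBall_self hRpos.le
  have hgderiv : ∀ x ∈ U, HasFDerivAt g
      (ContinuousLinearMap.id ℝ (EuclideanSpace ℝ (Fin n))
        - (A.symm : EuclideanSpace ℝ (Fin n) →L[ℝ] EuclideanSpace ℝ (Fin n)).comp (J x)) x := by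
    intro x hx
    exact (hasFDerivAt_id x).sub
      (((A.symm : EuclideanSpace ℝ (Fin n) →L[ℝ] EuclideanSpace ℝ (Fin n)).hasFDerivAt).comp
        x (hf x hx))
  have hlip : LipschitzOnWith κ.toNNReal g U := by
    refine Convex.lipschitzOnWith_of_nnnorm_hasFDerivWithin_le
      (f' := fun x => ContinuousLinearMap.id ℝ (EuclideanSpace ℝ (Fin n))
        - (A.symm : EuclideanSpace ℝ (Fin n) →L[ℝ] EuclideanSpace ℝ (Fin n)).comp (J x))
      (fun x hx => (hgderiv x hx).hasFDerivWithinAt) (fun x hx => ?_) hUconv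
    rw [← NNReal.coe_le_coe, coe_nnnorm, Real.coe_toNNReal _ hκ0]
    exact hA2 x hx
  have hlipdist : ∀ x ∈ U, ∀ y ∈ U, ‖g x - g y‖ ≤ κ * ‖x - y‖ := by
    intro x hx y hy
    have := hlip.dist_le_mul x hx y hy
    rwa [dist_eq_norm, dist_eq_norm, Real.coe_toNNReal _ hκ0] at this
  have hsq := Real.sqrt_nonneg ((1 - κ) ^ 2 / ω ^ 2 - 2 * α / ω)
  have hαR : α ≤ (1 - κ) * R := by
    have hα' : α ≤ (1 - κ) ^ 2 / ω := by
      rw [le_div_iff₀ hω]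
      nlinarith
    have hsplit : (1 - κ) * R
        = (1 - κ) ^ 2 / ω + (1 - κ) * Real.sqrt ((1 - κ) ^ 2 / ω ^ 2 - 2 * α / ω) := by
      rw [hR]; ring
    nlinarith [mul_nonneg h1κ.le hsq]
  have hmaps : Set.MapsTo g s s := by
    intro v hv
    have hvU : v ∈ U := hA4 hv
    have key : g v - xn = (g v - g xn) - A.symm (f xn) := by
      simp only [hg]
      abel
    have h1 : ‖g v - xn‖ ≤ κ * ‖v - xn‖ + α := by
      rw [key, hα]
      exact (norm_sub_le _ _).trans (by gcongr; exact hlipdist v hvU xn hxn)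
    have h2 : ‖v - xn‖ ≤ R := by
      rw [← dist_eq_norm]; exact Metric.mem_closedBall.mp hv
    have : ‖g v - xn‖ ≤ R := by nlinarith
    simpa [hs, Metric.mem_closedBall, dist_eq_norm] using this
  have hcontr : ContractingWith κ.toNNReal (hmaps.restrict g s s) :=
    ⟨Real.toNNReal_lt_one.mpr hκ1,
      ((hlip.mono hA4).mapsToRestrict hmaps)⟩
  have hsc : IsComplete s := Metric.isClosed_closedBall.isComplete
  have huiter : ∀ j, u j = g^[j] xn := by
    intro j
    induction j with
    | zero => simpa using hu0
    | succ k ih => rw [hu k, ih, Function.iterate_succ_apply']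
  obtain ⟨y, hys, hyfix, hytend, -⟩ :=
    hcontr.exists_fixedPoint' hsc hmaps hxns (edist_ne_top xn (g xn))
  have hgy : g y = y := hyfix
  have hfy : f y = 0 := by
    have h0 : A.symm (f y) = 0 := by
      have : y - A.symm (f y) = y := hgy
      exact sub_eq_self.mp this
    have := congrArg A h0
    simpa using this
  refine ⟨?_, y, hys, ?_, hfy, ?_⟩
  · intro j
    rw [huiter j]
    induction j with
    | zero => simpa using hxns
    | succ k ih => rw [Function.iterate_succ_apply']; exact hmaps ih
  · rw [funext huiter]
    exact hytend
  · intro w hws hfw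
    have hwfix : g w = w := by simp [hg, hfw]
    have hd := hlipdist w (hA4 hws) y (hA4 hys)
    rw [hwfix, hgy] at hd
    have hwy : ‖w - y‖ = 0 := le_antisymm (by nlinarith [norm_nonneg (w - y)]) (norm_nonneg _)
    exact sub_eq_zero.mp (norm_eq_zero.mp hwy)
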